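/- For every real number t with t ∉ {−1,0,1}, the biquadratic form p_t is not a sum of squares of bilinear forms: there is no natural number N and no family of real 3×3 matrices B₁, …, B_N such that p_t(x,y) = Σ_{i=1}^{N} (xᵀBᵢy)² for all x, y ∈ ℝ³. -/

import Mathlib

open Matrix

/-- The biquadratic form `p_t(x, y) = yᵀ Φ_t(xxᵀ) y`. -/
def pform (t : ℝ) (x y : Fin 3 → ℝ) : ℝ :=
  ((t^2-1)^2 * x 0^2 + x 1^2 + t^4 * x 2^2) * y 0^2 +
  ((t^2-1)^2 * x 1^2 + x 2^2 + t^4 * x 0^2) * y 1^2 +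
  ((t^2-1)^2 * x 2^2 + x 0^2 + t^4 * x 1^2) * y 2^2 -
  2 * (t^4-t^2+1) * (x 0 * x 1 * y 0 * y 1 + x 0 * x 2 * y 0 * y 2 + x 1 * x 2 * y 1 * y 2)

/-- For `t ∉ {-1, 0, 1}`, the biquadratic form `p_t` is not a sum of squares of bilinear
forms. -/
theorem pform_not_sos (t : ℝ) (ht : t ∉ ({-1, 0, 1} : Set ℝ)) :
    ¬ ∃ (N : ℕ) (B : Fin N → Matrix (Fin 3) (Fin 3) ℝ),
      ∀ x y : Fin 3 → ℝ, pform t x y = ∑ i, (x ⬝ᵥ (B i).mulVec y)^2 := by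
  simp only [Set.mem_insert_iff, Set.mem_singleton_iff, not_or] at ht
  obtain ⟨htm1, ht0, ht1⟩ := ht
  have ht2 : t ^ 2 - 1 ≠ 0 := by
    intro hh
    have h1 : (t - 1) * (t + 1) = 0 := by nlinarith
    rcases mul_eq_zero.mp h1 with h | h
    · exact ht1 (by linarith)
    · exact htm1 (by linarith)
  rintro ⟨N, B, h⟩
  -- If p_t vanishes at a point, every bilinear form in the SOS decomposition
  -- vanishes there.
  have key : ∀ (x y : Fin 3 → ℝ), pform t x y = 0 →
      ∀ i, x ⬝ᵥ (B i).mulVec y = 0 := by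
    intro x y hxy i
    have h0 : ∑ i, (x ⬝ᵥ (B i).mulVec y) ^ 2 = 0 := by rw [← h]; exact hxy
    have h1 := (Finset.sum_eq_zero_iff_of_nonneg
      (fun i _ => sq_nonneg (x ⬝ᵥ (B i).mulVec y))).mp h0 i (Finset.mem_univ i)
    exact pow_eq_zero_iff (by norm_num) |>.mp h1
  -- Zeros of p_t at the four sign vectors (1, ±1, ±1) paired with themselves.
  have z1 := key ![1,1,1] ![1,1,1] (by simp [pform]; ring)
  have z2 := key ![1,1,-1] ![1,1,-1] (by simp [pform]; ring)
  have z3 := key ![1,-1,1] ![1,-1,1] (by simp [pform]; ring)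
  have z4 := key ![1,-1,-1] ![1,-1,-1] (by simp [pform]; ring)
  -- A zero of p_t involving t: p_t((1,t,0),(t,1,0)) = 0.
  have z5 := key ![1,t,0] ![t,1,0] (by simp [pform]; ring)
  simp only [dotProduct, mulVec, Fin.sum_univ_three, Matrix.cons_val_zero,
    Matrix.cons_val_one, Matrix.head_cons, Matrix.cons_val_two, Matrix.tail_cons] at z1 z2 z3 z4 z5
  -- For each i, the above zeros give `(t²-1) * B i 0 1 = -(t * B i 2 2)`.
  have hq : ∀ i, ((t ^ 2 - 1) * B i 0 1) ^ 2 = (t * B i 2 2) ^ 2 := by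
    intro i
    have e1 := z1 i
    have e2 := z2 i
    have e3 := z3 i
    have e4 := z4 i
    have e5 := z5 i
    have hA : B i 0 1 + B i 1 0 = 0 := by linarith
    have hTr : B i 0 0 + B i 1 1 + B i 2 2 = 0 := by linarith
    have hkey : (t ^ 2 - 1) * B i 0 1 = -(t * B i 2 2) := by
      linear_combination t * hTr + t ^ 2 * hA - e5
    rw [hkey]; ring
  -- Coefficient comparison: evaluate at (e₀, e₁) and (e₂, e₂).
  have c1 := h ![1,0,0] ![0,1,0]
  have c2 := h ![0,0,1] ![0,0,1]
  simp only [pform, dotProduct, mulVec, Fin.sum_univ_three, Matrix.cons_val_zero,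
    Matrix.cons_val_one, Matrix.head_cons, Matrix.cons_val_two, Matrix.tail_cons] at c1 c2
  have S : (t ^ 2 - 1) ^ 2 * ∑ i, (B i 0 1) ^ 2 = t ^ 2 * ∑ i, (B i 2 2) ^ 2 := by
    rw [Finset.mul_sum, Finset.mul_sum]
    exact Finset.sum_congr rfl fun i _ => by linear_combination hq i
  ring_nf at c1 c2
  have hS1 : ∑ i, (B i 0 1) ^ 2 = t ^ 4 := by rw [← c1]
  have hS2 : ∑ i, (B i 2 2) ^ 2 = (t ^ 2 - 1) ^ 2 := by
    rw [← c2]; ring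
  rw [hS1, hS2] at S
  have hfin : t ^ 2 * (t ^ 2 - 1) ^ 3 = 0 := by nlinarith [S]
  exact mul_ne_zero (pow_ne_zero 2 ht0) (pow_ne_zero 3 ht2) hfin
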